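/- For every d ≥ 4, the number of distinct substrings of length d of the string L_d = σ^d(0) is at least Σ_{j=⌈d/2⌉-1}^{d-2} (d - j - 1) = ⌊d/2⌋·(⌊d/2⌋+1)/2; in particular it is at least d(d-1)/8. -/

import Mathlib

def sigmaRule : Bool → List Bool
  | false => [false, false, true]
  | true => [true]

def sigmaM (w : List Bool) : List Bool := w.flatMap sigmaRule

def subCount (w : List Bool) (k : ℕ) : ℕ :=
  (((w.tails.map (fun t => t.take k)).filter (fun s => s.length == k)).dedup).length

def LL (d : ℕ) : List Bool := sigmaM^[d] [false]

lemma sigmaM_append (a b : List Bool) : sigmaM (a ++ b) = sigmaM a ++ sigmaM b := by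
  simp [sigmaM]

lemma sigmaM_iter_append (n : ℕ) (a b : List Bool) :
    sigmaM^[n] (a ++ b) = sigmaM^[n] a ++ sigmaM^[n] b := by
  induction n generalizing a b with
  | zero => simp
  | succ n ih => simp [Function.iterate_succ_apply, sigmaM_append, ih]

lemma sigmaM_iter_one (n : ℕ) : sigmaM^[n] [true] = [true] := by
  induction n with
  | zero => rfl
  | succ n ih => simpa [Function.iterate_succ_apply, sigmaM, sigmaRule] using ih

lemma LL_succ (d : ℕ) : LL (d + 1) = LL d ++ LL d ++ [true] := by
  have : LL (d+1) = sigmaM^[d] (sigmaM [false]) := by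
    simp [LL, Function.iterate_succ_apply]
  rw [this]
  have h1 : sigmaM [false] = [false] ++ ([false] ++ [true]) := by rfl
  rw [h1, sigmaM_iter_append, sigmaM_iter_append, sigmaM_iter_one]
  simp [LL, List.append_assoc]

lemma LL_length (d : ℕ) : (LL d).length = 2 ^ (d + 1) - 1 := by
  induction d with
  | zero => rfl
  | succ d ih =>
    have h : (1:ℕ) ≤ 2 ^ (d+1) := Nat.one_le_two_pow
    rw [LL_succ]
    simp [ih]
    ring_nf
    omega

lemma LL_head (d : ℕ) : ∃ t, LL d = false :: t := by
  induction d with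
  | zero => exact ⟨[], rfl⟩
  | succ d ih =>
    obtain ⟨t, ht⟩ := ih
    exact ⟨t ++ LL d ++ [true], by rw [LL_succ, ht]; simp⟩

lemma LL_shape (j : ℕ) (hj : 1 ≤ j) :
    ∃ P : List Bool, LL j = P ++ [false] ++ List.replicate j true ∧
      P.length = 2 ^ (j + 1) - j - 2 := by
  induction j, hj using Nat.le_induction with
  | base => exact ⟨[false], by decide, by decide⟩
  | succ j hj ih =>
    obtain ⟨P, hP, hl⟩ := ih
    refine ⟨LL j ++ P, ?_, ?_⟩
    · rw [LL_succ, hP]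
      simp [List.replicate_succ' (n := j) (a := true), List.append_assoc]
    · have h2 : (2:ℕ)^(j+1) ≥ j + 2 := by
        have := Nat.lt_two_pow_self (n := j+1)
        omega
      simp [LL_length, hl]
      ring_nf
      omega

lemma LL_prefix (j d : ℕ) (h : j ≤ d) : LL j <+: LL d := by
  induction d with
  | zero => simpa [Nat.le_zero.mp h]
  | succ d ih =>
    rcases Nat.lt_or_ge j (d+1) with h' | h'
    · have := ih (by omega)
      rw [LL_succ]
      exact this.trans (by simp)
    · have : j = d + 1 := by omega
      simp [this]

lemma LLLL_infix (j d : ℕ) (h : j + 1 ≤ d) : LL j ++ LL j <:+: LL d := by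
  have h1 : LL j ++ LL j <+: LL (j+1) := by
    rw [LL_succ]
    simp
  exact (h1.trans (LL_prefix _ _ h)).isInfix

lemma two_pow_ge (d : ℕ) (hd : 4 ≤ d) : d ≤ 2 ^ ((d + 1) / 2) := by
  induction d using Nat.strong_induction_on with
  | _ d ih =>
    rcases Nat.lt_or_ge d 6 with h | h
    · interval_cases d <;> decide
    · have h1 : d - 2 < d := by omega
      have h2 := ih (d-2) h1 (by omega)
      have h3 : (d - 2 + 1) / 2 + 1 = (d + 1) / 2 := by omega
      have h4 : 2 ^ ((d-2+1)/2 + 1) = 2 * 2 ^ ((d-2+1)/2) := by ring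
      rw [h3] at h4
      omega

-- ### getElem? facts for shaped words

lemma shape_sep_left (u v : List Bool) (j : ℕ) :
    (u ++ [false] ++ List.replicate j true ++ [false] ++ v)[u.length]? = some false := by
  simp [List.append_assoc, List.getElem?_append_right]

lemma shape_true (u v : List Bool) (j t : ℕ) (h : t < j) :
    (u ++ [false] ++ List.replicate j true ++ [false] ++ v)[u.length + 1 + t]? = some true := by
  have h1 : u.length ≤ u.length + 1 + t := by omega
  rw [List.append_assoc, List.append_assoc, List.append_assoc,
    List.getElem?_append_right h1]
  have h2 : u.length + 1 + t - u.length = t + 1 := by omega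
  rw [h2]
  simp [List.getElem?_append, h]

lemma rep_ne (v v' : List Bool) (j j' : ℕ) (h : j < j') :
    List.replicate j true ++ ([false] ++ v) ≠ List.replicate j' true ++ ([false] ++ v') := by
  intro he
  have h1 : (List.replicate j true ++ ([false] ++ v))[j]? = some false := by
    rw [List.getElem?_append_right (by simp)]
    simp
  rw [he, List.getElem?_append] at h1
  simp [h] at h1

-- ### injectivity of the shaped words

lemma shape_inj (d m : ℕ) (hdm : d ≤ 2 * m + 2) (u u' v v' : List Bool) (j j' : ℕ)
    (hj : m ≤ j) (hj' : m ≤ j')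
    (hl : u.length + j + v.length + 2 = d) (hl' : u'.length + j' + v'.length + 2 = d)
    (heq : u ++ [false] ++ List.replicate j true ++ [false] ++ v
         = u' ++ [false] ++ List.replicate j' true ++ [false] ++ v') :
    j = j' ∧ u.length = u'.length := by
  rcases Nat.lt_trichotomy u.length u'.length with hc | hc | hc
  · exfalso
    rcases Nat.lt_or_ge u'.length (u.length + j + 1) with hc2 | hc2
    · have hf := shape_sep_left u' v' j'
      rw [← heq] at hf
      have ht := shape_true u v j (u'.length - u.length - 1) (by omega)
      rw [show u.length + 1 + (u'.length - u.length - 1) = u'.length from by omega] at ht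
      rw [ht] at hf
      simp at hf
    · omega
  · have heq2 : u ++ ([false] ++ (List.replicate j true ++ ([false] ++ v)))
        = u' ++ ([false] ++ (List.replicate j' true ++ ([false] ++ v'))) := by
      simpa [List.append_assoc] using heq
    obtain ⟨h1, h2⟩ := List.append_inj heq2 hc
    simp only [List.singleton_append, List.cons.injEq] at h2
    have h3 := h2.2
    rcases Nat.lt_trichotomy j j' with hj2 | hj2 | hj2
    · exact absurd h3 (rep_ne _ _ _ _ hj2)
    · exact ⟨hj2, hc⟩
    · exact absurd h3.symm (rep_ne _ _ _ _ hj2)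
  · exfalso
    rcases Nat.lt_or_ge u.length (u'.length + j' + 1) with hc2 | hc2
    · have hf := shape_sep_left u v j
      rw [heq] at hf
      have ht := shape_true u' v' j' (u.length - u'.length - 1) (by omega)
      rw [show u'.length + 1 + (u.length - u'.length - 1) = u.length from by omega] at ht
      rw [ht] at hf
      simp at hf
    · omega

-- ### the prefix of LL j before the final 0 1^j block

def Pw (j : ℕ) : List Bool := (LL j).take ((LL j).length - (j + 1))

lemma Pw_spec (j : ℕ) (hj : 1 ≤ j) :
    LL j = Pw j ++ [false] ++ List.replicate j true ∧ (Pw j).length = 2 ^ (j + 1) - j - 2 := by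
  obtain ⟨P, hP, hl⟩ := LL_shape j hj
  have hlen : (LL j).length - (j + 1) = P.length := by
    rw [hP]; simp
  have hPw : Pw j = P := by
    rw [Pw, hlen, hP, List.append_assoc, List.take_left' rfl]
  rw [hPw]
  exact ⟨hP, hl⟩

-- ### the words w_{j,i}

def wordW (d j i : ℕ) : List Bool :=
  ((Pw j).drop ((Pw j).length - (d - j - 2 - i))) ++ [false] ++ List.replicate j true
    ++ [false] ++ ((LL j).drop 1).take i

lemma wordW_spec (d j i : ℕ) (hd : 4 ≤ d) (hm : (d + 1) / 2 - 1 ≤ j) (hj2 : j ≤ d - 2)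
    (hi : i ≤ d - j - 2) :
    ((Pw j).drop ((Pw j).length - (d - j - 2 - i))).length = d - j - 2 - i ∧
    (((LL j).drop 1).take i).length = i ∧
    (wordW d j i).length = d ∧
    wordW d j i <:+: LL d := by
  have hj1 : 1 ≤ j := by omega
  have hpow : d ≤ 2 ^ (j + 1) := by
    calc d ≤ 2 ^ ((d + 1) / 2) := two_pow_ge d hd
    _ ≤ 2 ^ (j + 1) := Nat.pow_le_pow_right (by norm_num) (by omega)
  obtain ⟨hLLj, hPwlen⟩ := Pw_spec j hj1
  have hPwge : d - j - 2 - i ≤ (Pw j).length := by omega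
  have hulen : ((Pw j).drop ((Pw j).length - (d - j - 2 - i))).length = d - j - 2 - i := by
    rw [List.length_drop]; omega
  have hLLjlen : (LL j).length = 2 ^ (j + 1) - 1 := LL_length j
  have hvlen : (((LL j).drop 1).take i).length = i := by
    rw [List.length_take, List.length_drop]
    omega
  refine ⟨hulen, hvlen, ?_, ?_⟩
  · simp [wordW, hulen, hvlen]
    omega
  · -- infix of LL j ++ LL j, which is infix of LL d
    obtain ⟨t, ht⟩ := LL_head j
    have hpre : [false] ++ ((LL j).drop 1).take i <+: LL j := by
      have h0 : [false] ++ ((LL j).drop 1).take i = (LL j).take (i + 1) := by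
        rw [ht]
        simp
      rw [h0]
      exact List.take_prefix _ _
    have hsuf : ((Pw j).drop ((Pw j).length - (d - j - 2 - i))) ++ [false]
        ++ List.replicate j true <:+ LL j := by
      obtain ⟨p, hp⟩ := List.drop_suffix ((Pw j).length - (d - j - 2 - i)) (Pw j)
      refine ⟨p, ?_⟩
      rw [hLLj]
      conv_rhs => rw [← hp]
      simp [List.append_assoc]
    have hinf : wordW d j i <:+: LL j ++ LL j := by
      obtain ⟨p, hp⟩ := hsuf
      obtain ⟨r, hr⟩ := hpre
      refine ⟨p, r, ?_⟩
      symm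
      calc LL j ++ LL j
          = (p ++ ((Pw j).drop ((Pw j).length - (d - j - 2 - i)) ++ [false]
              ++ List.replicate j true)) ++ (([false] ++ ((LL j).drop 1).take i) ++ r) := by
            rw [hp]
            rw [show ([false] ++ ((LL j).drop 1).take i) ++ r = LL j from hr]
        _ = p ++ wordW d j i ++ r := by simp [wordW, List.append_assoc]
    exact hinf.trans (LLLL_infix j d (by omega))

-- ### counting distinct factors

lemma card_le_subCount (w : List Bool) (k : ℕ) (S : Finset (List Bool))
    (h : ∀ s ∈ S, s <:+: w ∧ s.length = k) : S.card ≤ subCount w k := by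
  have hsub : S ⊆ ((w.tails.map (fun t => t.take k)).filter
      (fun s => s.length == k)).toFinset := by
    intro s hs
    obtain ⟨hinf, hlen⟩ := h s hs
    obtain ⟨t, hst, htw⟩ := List.infix_iff_prefix_suffix.mp hinf
    rw [List.mem_toFinset, List.mem_filter]
    constructor
    · rw [List.mem_map]
      refine ⟨t, (List.mem_tails t w).mpr htw, ?_⟩
      obtain ⟨r, hr⟩ := hst
      rw [← hr, ← hlen, List.take_left]
    · simp [hlen]
  calc S.card ≤ _ := Finset.card_le_card hsub
    _ = subCount w k := by rw [List.card_toFinset]; rfl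

theorem distinct_substring_count_lower_bound (d : ℕ) (hd : 4 ≤ d) :
    ((Finset.Icc ((d + 1) / 2 - 1) (d - 2)).sum fun j => d - j - 1)
        = d / 2 * (d / 2 + 1) / 2 ∧
    ((Finset.Icc ((d + 1) / 2 - 1) (d - 2)).sum fun j => d - j - 1)
        ≤ subCount (sigmaM^[d] [false]) d ∧
    (d : ℝ) * ((d : ℝ) - 1) / 8 ≤ (subCount (sigmaM^[d] [false]) d : ℝ) := by
  classical
  set m : ℕ := (d + 1) / 2 - 1 with hmdef
  -- Part 1 : the closed form of the sum
  have hsum : ((Finset.Icc m (d - 2)).sum fun j => d - j - 1) = d / 2 * (d / 2 + 1) / 2 := by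
    set c := d / 2 with hc
    rw [← Finset.Ico_add_one_right_eq_Icc, Finset.sum_Ico_eq_sum_range]
    rw [show d - 2 + 1 - m = c from by omega]
    have hcongr : ∀ i ∈ Finset.range c, d - (m + i) - 1 = c + 1 - 1 - i := by
      intro i hi
      simp only [Finset.mem_range] at hi
      omega
    rw [Finset.sum_congr rfl hcongr]
    have e1 : (∑ i ∈ Finset.range c, (c + 1 - 1 - i))
        = ∑ i ∈ Finset.range (c + 1), (c + 1 - 1 - i) := by
      rw [Finset.sum_range_succ]
      simp
    have hrefl := Finset.sum_range_reflect (fun j => j) (c + 1)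
    rw [e1, hrefl]
    have h2 : (∑ i ∈ Finset.range (c + 1), i) * 2 = (c + 1) * c :=
      Finset.sum_range_id_mul_two (c + 1)
    have h4 : (c + 1) * c = c * (c + 1) := by ring
    omega
  -- Part 2 : the counting bound
  have hcount : ((Finset.Icc m (d - 2)).sum fun j => d - j - 1)
      ≤ subCount (sigmaM^[d] [false]) d := by
    show _ ≤ subCount (LL d) d
    set I : Finset ((_ : ℕ) × ℕ) :=
      (Finset.Icc m (d - 2)).sigma (fun j => Finset.range (d - j - 1)) with hI
    have hmem : ∀ p : (_ : ℕ) × ℕ, p ∈ I →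
        m ≤ p.1 ∧ p.1 ≤ d - 2 ∧ p.2 ≤ d - p.1 - 2 := by
      intro p hp
      simp only [hI, Finset.mem_sigma, Finset.mem_Icc, Finset.mem_range] at hp
      omega
    set F : (_ : ℕ) × ℕ → List Bool := fun p => wordW d p.1 p.2 with hF
    have hinj : Set.InjOn F I := by
      rintro ⟨j, i⟩ hp ⟨j', i'⟩ hq he
      have hp1 := hmem _ hp
      have hq1 := hmem _ hq
      dsimp only at hp1 hq1
      obtain ⟨h1, h2, h3⟩ := hp1
      obtain ⟨h1', h2', h3'⟩ := hq1
      obtain ⟨hu, hv, -, -⟩ := wordW_spec d j i hd h1 h2 h3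
      obtain ⟨hu', hv', -, -⟩ := wordW_spec d j' i' hd h1' h2' h3'
      have hkey := shape_inj d m (by omega) _ _ _ _ j j' h1 h1'
        (by rw [hu, hv]; omega) (by rw [hu', hv']; omega) he
      have hj : j = j' := hkey.1
      have hi : i = i' := by
        have := hkey.2
        rw [hu, hu'] at this
        omega
      subst hj; subst hi; rfl
    set S : Finset (List Bool) := I.image F with hS
    have hcard : S.card = ∑ j ∈ Finset.Icc m (d - 2), (d - j - 1) := by
      rw [hS, Finset.card_image_of_injOn hinj, hI, Finset.card_sigma]
      simp
    have hle : S.card ≤ subCount (LL d) d := by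
      apply card_le_subCount
      intro s hs
      rw [hS, Finset.mem_image] at hs
      obtain ⟨p, hp, hps⟩ := hs
      obtain ⟨h1, h2, h3⟩ := hmem _ hp
      obtain ⟨-, -, hlen, hinf⟩ := wordW_spec d p.1 p.2 hd h1 h2 h3
      rw [← hps]
      exact ⟨hinf, hlen⟩
    omega
  refine ⟨hsum, hcount, ?_⟩
  -- Part 3 : the real inequality
  have h8 : d * (d - 1) ≤ 8 * (d / 2 * (d / 2 + 1) / 2) := by
    set c := d / 2 with hc
    obtain ⟨k, hk⟩ := Nat.even_mul_succ_self c
    have hdiv : c * (c + 1) / 2 = k := by omega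
    calc d * (d - 1) ≤ (2 * c + 1) * (2 * c) := Nat.mul_le_mul (by omega) (by omega)
      _ = 4 * (c * (c + 1)) - 2 * c := by ring_nf; omega
      _ ≤ 4 * (c * (c + 1)) := by omega
      _ = 8 * (c * (c + 1) / 2) := by omega
  have hfin : d * (d - 1) ≤ 8 * subCount (sigmaM^[d] [false]) d := by omega
  have hcast : ((d * (d - 1) : ℕ) : ℝ) ≤ ((8 * subCount (sigmaM^[d] [false]) d : ℕ) : ℝ) :=
    Nat.cast_le.mpr hfin
  have hd1 : ((d - 1 : ℕ) : ℝ) = (d : ℝ) - 1 := by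
    rw [Nat.cast_sub (by omega)]
    simp
  push_cast [hd1] at hcast
  linarith
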